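/- Let r_1,…,r_N ≥ 0 with N ≥ 2 and ϱ ≥ 1, a ≥ ϱ > 0. Define s̄_1 = Σ i^a r_i, s̄_2 = Σ i^{a+ϱ} r_i, s̄_3 = Σ i^{a+2ϱ} r_i, δ̄_1 = N^ϱ s̄_1 − s̄_2, δ̄_2 = N^ϱ s̄_2 − s̄_3, δ̄ = (δ̄_2/δ̄_1)^{1/ϱ}. Assume δ̄_1 > 0 and δ̄ > 1. Then Σ_{i=1}^N r_i ≥ δ̄_1 (N^a − (δ̄−1)^a) / (N^a δ̄^a (N^ϱ − (δ̄−1)^ϱ)) + s̄_1/N^a. -/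

import Mathlib

open Finset Real Set

lemma convexOn_rpow_neg {γ : ℝ} (hγ : 1 ≤ γ) :
    ConvexOn ℝ (Set.Ioi (0:ℝ)) fun v : ℝ => v ^ (-γ) := by
  have himg : (fun v : ℝ => v⁻¹) '' Set.Ioi 0 = Set.Ioi (0:ℝ) := by
    ext x
    constructor
    · rintro ⟨y, hy, rfl⟩
      exact inv_pos.2 (show (0:ℝ) < y from hy)
    · intro hx
      exact ⟨x⁻¹, show (0:ℝ) < x⁻¹ from inv_pos.2 hx, inv_inv x⟩
  have hinv : ConvexOn ℝ (Set.Ioi (0:ℝ)) fun v : ℝ => v⁻¹ := by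
    have h := convexOn_zpow (𝕜 := ℝ) (-1)
    simpa using h
  have hpow : ConvexOn ℝ ((fun v : ℝ => v⁻¹) '' Set.Ioi 0) fun t : ℝ => t ^ γ := by
    rw [himg]
    exact (convexOn_rpow hγ).subset Ioi_subset_Ici_self (convex_Ioi 0)
  have hmono : MonotoneOn (fun t : ℝ => t ^ γ) ((fun v : ℝ => v⁻¹) '' Set.Ioi 0) := by
    rw [himg]
    intro x hx y _ hxy
    exact Real.rpow_le_rpow (le_of_lt hx) hxy (by linarith)
  refine (hpow.comp hinv hmono).congr fun v hv => ?_
  have hv0 : (0:ℝ) < v := hv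
  simp only [Function.comp]
  rw [Real.inv_rpow hv0.le, ← Real.rpow_neg hv0.le]

lemma slope_ineq {β d c T : ℝ} (hβ : 1 ≤ β) (hd : 0 ≤ d) (hdc : d < c) (hcT : c < T) :
    (T ^ β - d ^ β) * (T - c) ≤ (T ^ β - c ^ β) * (T - d) := by
  have hTd : (0:ℝ) < T - d := by linarith
  have h := (convexOn_rpow hβ).2 (Set.mem_Ici.2 hd)
    (Set.mem_Ici.2 (by linarith : (0:ℝ) ≤ T))
    (div_nonneg (by linarith : (0:ℝ) ≤ T - c) hTd.le)
    (div_nonneg (by linarith : (0:ℝ) ≤ c - d) hTd.le)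
    (show (T - c)/(T - d) + (c - d)/(T - d) = 1 by field_simp; ring)
  simp only [smul_eq_mul] at h
  have hcomb : (T - c)/(T - d) * d + (c - d)/(T - d) * T = c := by
    field_simp
    ring
  rw [hcomb] at h
  have h2 : c ^ β * (T - d) ≤ (T - c) * d ^ β + (c - d) * T ^ β := by
    have h3 := mul_le_mul_of_nonneg_right h hTd.le
    have e : ((T - c)/(T - d) * d ^ β + (c - d)/(T - d) * T ^ β) * (T - d)
        = (T - c) * d ^ β + (c - d) * T ^ β := by
      field_simp
    rw [e] at h3
    linarith
  nlinarith [h2]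


lemma psi_int {T β s : ℝ} (hs : 0 < s) (hsT : s < T) :
    IntervalIntegrable (fun σ : ℝ => β * T ^ β * (T + σ * (s - T)) ^ (-β - 1))
      MeasureTheory.volume 0 1 := by
  apply ContinuousOn.intervalIntegrable
  have hu : ∀ σ ∈ Set.uIcc (0:ℝ) 1, 0 < T + σ * (s - T) := by
    intro σ hσ
    rw [Set.uIcc_of_le (by norm_num)] at hσ
    nlinarith [hσ.1, hσ.2]
  have hcont : ContinuousOn (fun σ : ℝ => T + σ * (s - T)) (Set.uIcc (0:ℝ) 1) :=
    (continuous_const.add (continuous_id.mul continuous_const)).continuousOn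
  exact continuousOn_const.mul (hcont.rpow_const fun x hx => Or.inl (ne_of_gt (hu x hx)))

lemma psi_rep {T β : ℝ} (hβ : 1 ≤ β) {s : ℝ} (hs : 0 < s) (hsT : s < T) :
    (T ^ β * s ^ (-β) - 1) / (T - s)
      = ∫ σ in (0:ℝ)..1, β * T ^ β * (T + σ * (s - T)) ^ (-β - 1) := by
  have hT : 0 < T := hs.trans hsT
  have hTs : T - s ≠ 0 := ne_of_gt (by linarith)
  have hu : ∀ σ ∈ Set.uIcc (0:ℝ) 1, 0 < T + σ * (s - T) := by
    intro σ hσ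
    rw [Set.uIcc_of_le (by norm_num)] at hσ
    nlinarith [hσ.1, hσ.2]
  have hderiv : ∀ σ ∈ Set.uIcc (0:ℝ) 1,
      HasDerivAt (fun σ : ℝ => T ^ β / (T - s) * (T + σ * (s - T)) ^ (-β))
        (β * T ^ β * (T + σ * (s - T)) ^ (-β - 1)) σ := by
    intro σ hσ
    have h1 : HasDerivAt (fun σ : ℝ => T + σ * (s - T)) (s - T) σ := by
      simpa using ((hasDerivAt_id σ).mul_const (s - T)).const_add T
    have h2 := (h1.rpow_const (p := -β) (Or.inl (ne_of_gt (hu σ hσ))))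
    have h3 := h2.const_mul (T ^ β / (T - s))
    refine h3.congr_deriv ?_
    rw [div_mul_eq_mul_div, div_eq_iff hTs]
    ring
  rw [intervalIntegral.integral_eq_sub_of_hasDerivAt hderiv (psi_int hs hsT)]
  have e1 : T + (1:ℝ) * (s - T) = s := by ring
  have e0 : T + (0:ℝ) * (s - T) = T := by ring
  rw [e1, e0]
  have e2 : T ^ β * T ^ (-β) = 1 := by
    rw [← Real.rpow_add hT]
    simp
  rw [div_mul_eq_mul_div, div_mul_eq_mul_div, div_sub_div_same, e2]

lemma convexOn_psi {T β : ℝ} (hT : 0 < T) (hβ : 1 ≤ β) :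
    ConvexOn ℝ (Set.Ioo (0:ℝ) T) (fun s : ℝ => (T ^ β * s ^ (-β) - 1) / (T - s)) := by
  refine ⟨convex_Ioo 0 T, ?_⟩
  intro x hx y hy va vb ha hb hab
  simp only [smul_eq_mul]
  have hxy : va * x + vb * y ∈ Set.Ioo (0:ℝ) T := by
    have := (convex_Ioo (0:ℝ) T) hx hy ha hb hab
    simpa using this
  rw [psi_rep hβ hx.1 hx.2, psi_rep hβ hy.1 hy.2, psi_rep hβ hxy.1 hxy.2]
  rw [← intervalIntegral.integral_const_mul, ← intervalIntegral.integral_const_mul,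
    ← intervalIntegral.integral_add ((psi_int hx.1 hx.2).const_mul va)
      ((psi_int hy.1 hy.2).const_mul vb)]
  apply intervalIntegral.integral_mono_on (by norm_num) (psi_int hxy.1 hxy.2)
    (((psi_int hx.1 hx.2).const_mul va).add ((psi_int hy.1 hy.2).const_mul vb))
  intro σ hσ
  have hux : 0 < T + σ * (x - T) := by nlinarith [hσ.1, hσ.2, hx.1, hx.2]
  have huy : 0 < T + σ * (y - T) := by nlinarith [hσ.1, hσ.2, hy.1, hy.2]
  have hcomb : T + σ * ((va * x + vb * y) - T)
      = va * (T + σ * (x - T)) + vb * (T + σ * (y - T)) := by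
    linear_combination (σ * T - T) * hab
  have hconv := (convexOn_rpow_neg (γ := β + 1) (by linarith)).2
    (Set.mem_Ioi.2 hux) (Set.mem_Ioi.2 huy) ha hb hab
  simp only [smul_eq_mul] at hconv
  have he : -(β + 1) = -β - 1 := by ring
  rw [he] at hconv
  rw [hcomb]
  have hc : (0:ℝ) ≤ β * T ^ β := by positivity
  nlinarith [mul_le_mul_of_nonneg_left hconv hc]

theorem frolov_cor6_second (N : ℕ) (hN : 2 ≤ N) (r : ℕ → ℝ) (a ϱ : ℝ)
    (hr : ∀ i ∈ Finset.Icc 1 N, 0 ≤ r i)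
    (hϱ : 1 ≤ ϱ) (hϱ0 : 0 < ϱ) (haϱ : ϱ ≤ a)
    (s₁ s₂ s₃ δ₁ δ₂ δ : ℝ)
    (hs₁ : s₁ = ∑ i ∈ Finset.Icc 1 N, (i : ℝ) ^ a * r i)
    (hs₂ : s₂ = ∑ i ∈ Finset.Icc 1 N, (i : ℝ) ^ (a + ϱ) * r i)
    (hs₃ : s₃ = ∑ i ∈ Finset.Icc 1 N, (i : ℝ) ^ (a + 2 * ϱ) * r i)
    (hδ₁ : δ₁ = (N : ℝ) ^ ϱ * s₁ - s₂)
    (hδ₂ : δ₂ = (N : ℝ) ^ ϱ * s₂ - s₃)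
    (hδ : δ = (δ₂ / δ₁) ^ (1 / ϱ))
    (hδ₁pos : 0 < δ₁) (hδgt : 1 < δ) :
    ∑ i ∈ Finset.Icc 1 N, r i
      ≥ δ₁ * ((N : ℝ) ^ a - (δ - 1) ^ a)
          / ((N : ℝ) ^ a * δ ^ a * ((N : ℝ) ^ ϱ - (δ - 1) ^ ϱ))
        + s₁ / (N : ℝ) ^ a := by
  obtain ⟨M, rfl⟩ : ∃ M, N = M + 2 := ⟨N - 2, by omega⟩
  have hϱne : ϱ ≠ 0 := ne_of_gt hϱ0
  have hN0 : (0:ℝ) < ((M + 2 : ℕ) : ℝ) := by positivity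
  set T : ℝ := ((M + 2 : ℕ) : ℝ) ^ ϱ with hTdef
  have hT0 : 0 < T := Real.rpow_pos_of_pos hN0 ϱ
  set β : ℝ := a / ϱ with hβdef
  have hβ1 : 1 ≤ β := (one_le_div hϱ0).2 haϱ
  have hϱβ : ϱ * β = a := by
    rw [hβdef]; field_simp
  have hTβ : T ^ β = ((M + 2 : ℕ) : ℝ) ^ a := by
    rw [hTdef, ← Real.rpow_mul hN0.le, hϱβ]
  have hTβ0 : 0 < T ^ β := Real.rpow_pos_of_pos hT0 β
  set w : ℕ → ℝ := fun i => (i:ℝ) ^ a * (T - (i:ℝ) ^ ϱ) * r i with hwdef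
  set z : ℕ → ℝ := fun i => (i:ℝ) ^ ϱ with hzdef
  set t : Finset ℕ := Finset.Icc 1 (M + 1) with htdef
  have htop : ∀ f : ℕ → ℝ,
      ∑ i ∈ Finset.Icc 1 (M + 2), f i = (∑ i ∈ t, f i) + f (M + 2) := fun f =>
    Finset.sum_Icc_succ_top (by omega) f
  have hipos : ∀ i ∈ Finset.Icc 1 (M + 2), (0:ℝ) < (i:ℝ) := by
    intro i hi
    rw [Finset.mem_Icc] at hi
    have : (1:ℝ) ≤ (i:ℝ) := by exact_mod_cast hi.1
    linarith
  have htsub : ∀ i ∈ t, i ∈ Finset.Icc 1 (M + 2) := by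
    intro i hi
    rw [htdef, Finset.mem_Icc] at hi
    rw [Finset.mem_Icc]
    omega
  have hzT : ∀ i ∈ t, z i < T := by
    intro i hi
    rw [htdef, Finset.mem_Icc] at hi
    have hile : (i:ℝ) < ((M + 2 : ℕ) : ℝ) := by exact_mod_cast (by omega : i < M + 2)
    exact Real.rpow_lt_rpow (by positivity) hile hϱ0
  have hz0 : ∀ i ∈ t, 0 < z i := fun i hi =>
    Real.rpow_pos_of_pos (hipos i (htsub i hi)) ϱ
  have hwnn : ∀ i ∈ t, 0 ≤ w i := by
    intro i hi
    apply mul_nonneg (mul_nonneg (Real.rpow_nonneg (hipos i (htsub i hi)).le a)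
      (by linarith [hzT i hi]))
    exact hr i (htsub i hi)
  have hA : ∑ i ∈ t, w i = δ₁ := by
    have h1 : δ₁ = ∑ i ∈ Finset.Icc 1 (M + 2), w i := by
      rw [hδ₁, hs₁, hs₂, Finset.mul_sum, ← Finset.sum_sub_distrib]
      apply Finset.sum_congr rfl
      intro i hi
      have h0 := hipos i hi
      simp only [hwdef]
      rw [Real.rpow_add h0]
      ring
    rw [h1, htop]
    have hw0 : w (M + 2) = 0 := by
      simp only [hwdef, hTdef]
      rw [sub_self, mul_zero, zero_mul]
    rw [hw0, add_zero]
  have hB : ∑ i ∈ t, w i * z i = δ₂ := by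
    have h1 : δ₂ = ∑ i ∈ Finset.Icc 1 (M + 2), w i * z i := by
      rw [hδ₂, hs₂, hs₃, Finset.mul_sum, ← Finset.sum_sub_distrib]
      apply Finset.sum_congr rfl
      intro i hi
      have h0 := hipos i hi
      simp only [hwdef, hzdef]
      rw [show a + 2 * ϱ = a + ϱ + ϱ by ring]
      simp only [Real.rpow_add h0]
      ring
    rw [h1, htop]
    have hw0 : w (M + 2) * z (M + 2) = 0 := by
      simp only [hwdef, hTdef]
      rw [sub_self, mul_zero, zero_mul, zero_mul]
    rw [hw0, add_zero]
  have hδ₂nn : 0 ≤ δ₂ := by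
    rw [← hB]
    exact Finset.sum_nonneg fun i hi => mul_nonneg (hwnn i hi) (hz0 i hi).le
  set c : ℝ := δ₂ / δ₁ with hcdef
  have hc0 : 0 ≤ c := div_nonneg hδ₂nn hδ₁pos.le
  have hδϱ : δ ^ ϱ = c := by
    rw [hδ, ← Real.rpow_mul hc0, one_div_mul_cancel hϱne, Real.rpow_one]
  have hδpos : (0:ℝ) < δ := by linarith
  have hδ1pos : (0:ℝ) < δ - 1 := by linarith
  have hcT : c < T := by
    have h1 : δ₂ ≤ ((M + 1 : ℕ) : ℝ) ^ ϱ * δ₁ := by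
      rw [← hB, ← hA, Finset.mul_sum]
      apply Finset.sum_le_sum
      intro i hi
      rw [mul_comm (((M + 1 : ℕ) : ℝ) ^ ϱ) (w i)]
      apply mul_le_mul_of_nonneg_left _ (hwnn i hi)
      have hi' := hi
      rw [htdef, Finset.mem_Icc] at hi'
      exact Real.rpow_le_rpow (by positivity) (by exact_mod_cast hi'.2) hϱ0.le
    have h2 : ((M + 1 : ℕ) : ℝ) ^ ϱ < T := by
      rw [hTdef]
      exact Real.rpow_lt_rpow (by positivity)
        (by exact_mod_cast (by omega : M + 1 < M + 2)) hϱ0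
    calc c = δ₂ / δ₁ := rfl
      _ ≤ ((M + 1 : ℕ) : ℝ) ^ ϱ := by
          rw [div_le_iff₀ hδ₁pos]; linarith
      _ < T := h2
  set d : ℝ := (δ - 1) ^ ϱ with hddef
  have hd0 : 0 < d := Real.rpow_pos_of_pos hδ1pos ϱ
  have hdc : d < c := by
    rw [hddef, ← hδϱ]
    exact Real.rpow_lt_rpow hδ1pos.le (by linarith) hϱ0
  have hc0' : 0 < c := lt_trans hd0 hdc
  have hδa : δ ^ a = c ^ β := by
    rw [← hδϱ, ← Real.rpow_mul hδpos.le, hϱβ]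
  have hδ1a : (δ - 1) ^ a = d ^ β := by
    rw [hddef, ← Real.rpow_mul hδ1pos.le, hϱβ]
  have hcβ0 : 0 < c ^ β := Real.rpow_pos_of_pos hc0' β
  have hdβ0 : 0 < d ^ β := Real.rpow_pos_of_pos hd0 β
  have hTd : 0 < T - d := by linarith
  have hTc : 0 < T - c := by linarith
  set ψ : ℝ → ℝ := fun s => (T ^ β * s ^ (-β) - 1) / (T - s) with hψdef
  have hzmem : ∀ i ∈ t, z i ∈ Set.Ioo (0:ℝ) T := fun i hi => ⟨hz0 i hi, hzT i hi⟩
  have hsumw : 0 < ∑ i ∈ t, w i := by rw [hA]; exact hδ₁pos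
  have hjen := (convexOn_psi hT0 hβ1).map_centerMass_le hwnn hsumw hzmem
  have hcm : t.centerMass w z = c := by
    rw [Finset.centerMass]
    simp only [smul_eq_mul]
    rw [hB, hA, hcdef, inv_mul_eq_div]
  have hcm2 : t.centerMass w (ψ ∘ z) = (∑ i ∈ t, w i * ψ (z i)) / δ₁ := by
    rw [Finset.centerMass]
    simp only [smul_eq_mul, Function.comp]
    rw [hA, inv_mul_eq_div]
  rw [hcm, hcm2] at hjen
  have hD : ∑ i ∈ t, w i * ψ (z i)
      = ((M + 2 : ℕ) : ℝ) ^ a * (∑ i ∈ Finset.Icc 1 (M + 2), r i) - s₁ := by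
    have h1 : ∀ i ∈ t, w i * ψ (z i) = (((M + 2 : ℕ) : ℝ) ^ a - (i:ℝ) ^ a) * r i := by
      intro i hi
      have h0 := hipos i (htsub i hi)
      have hTi : (0:ℝ) < T - (i:ℝ) ^ ϱ := by
        have := hzT i hi
        simp only [hzdef] at this
        linarith
      have hTine : T - (i:ℝ) ^ ϱ ≠ 0 := ne_of_gt hTi
      have e1 : ((i:ℝ) ^ ϱ) ^ (-β) = (i:ℝ) ^ (-a) := by
        rw [← Real.rpow_mul h0.le, show ϱ * -β = -(ϱ * β) by ring, hϱβ]
      have e2 : (i:ℝ) ^ a * (i:ℝ) ^ (-a) = 1 := by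
        rw [← Real.rpow_add h0]; simp
      simp only [hψdef, hwdef, hzdef]
      rw [e1, hTβ, ← mul_div_assoc, div_eq_iff hTine]
      linear_combination ((T - (i:ℝ) ^ ϱ) * r i * ((M + 2 : ℕ) : ℝ) ^ a) * e2
    calc ∑ i ∈ t, w i * ψ (z i)
        = ∑ i ∈ t, (((M + 2 : ℕ) : ℝ) ^ a - (i:ℝ) ^ a) * r i :=
          Finset.sum_congr rfl h1
      _ = ∑ i ∈ Finset.Icc 1 (M + 2), (((M + 2 : ℕ) : ℝ) ^ a - (i:ℝ) ^ a) * r i := by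
          rw [htop (fun i => (((M + 2 : ℕ) : ℝ) ^ a - (i:ℝ) ^ a) * r i)]
          rw [sub_self, zero_mul, add_zero]
      _ = ((M + 2 : ℕ) : ℝ) ^ a * (∑ i ∈ Finset.Icc 1 (M + 2), r i) - s₁ := by
          rw [hs₁, Finset.mul_sum, ← Finset.sum_sub_distrib]
          exact Finset.sum_congr rfl fun i _ => by ring
  rw [hD] at hjen
  -- ψ c ≥ the target quotient
  have hψc : ψ c = (T ^ β - c ^ β) / (c ^ β * (T - c)) := by
    simp only [hψdef]
    rw [Real.rpow_neg hc0'.le, div_eq_div_iff (ne_of_gt hTc) (by positivity)]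
    field_simp
  have hslope := slope_ineq hβ1 hd0.le hdc hcT
  have hψge : (T ^ β - d ^ β) / (c ^ β * (T - d)) ≤ ψ c := by
    rw [hψc, div_le_div_iff₀ (by positivity) (by positivity)]
    have h6 := mul_le_mul_of_nonneg_left hslope hcβ0.le
    ring_nf at h6 ⊢
    linarith [h6]
  -- final assembly
  have key : δ₁ * ((T ^ β - d ^ β) / (c ^ β * (T - d))) + s₁
      ≤ T ^ β * ∑ i ∈ Finset.Icc 1 (M + 2), r i := by
    have h4 := mul_le_mul_of_nonneg_left hψge hδ₁pos.le
    have h5 : δ₁ * ψ c ≤ ((M + 2 : ℕ) : ℝ) ^ a * (∑ i ∈ Finset.Icc 1 (M + 2), r i) - s₁ := by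
      have := (le_div_iff₀ hδ₁pos).1 hjen
      linarith [this]
    rw [← hTβ] at h5
    linarith
  rw [ge_iff_le, hδa, hδ1a, ← hTβ]
  have expand : δ₁ * (T ^ β - d ^ β) / (T ^ β * c ^ β * (T - d)) + s₁ / T ^ β
      = (δ₁ * ((T ^ β - d ^ β) / (c ^ β * (T - d))) + s₁) / T ^ β := by
    field_simp
  rw [expand, div_le_iff₀ hTβ0]
  linarith [key]
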